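/- The map pr is a projection onto the space of sectional curvature tensors: for every quadrilinear map S : T×T×T×T → ℝ that is symmetric in its first pair and in its second pair of arguments (S(X,Y;U,V) = S(Y,X;U,V) = S(X,Y;V,U)), the quadrilinear map pr S is a sectional curvature tensor, and pr S = S whenever S is itself a sectional curvature tensor. -/
import Mathlib


open scoped BigOperators

variable {T : Type*} [NormedAddCommGroup T] [InnerProductSpace ℝ T] [FiniteDimensional ℝ T]

/-- A map `T → T → T → T → ℝ` that is linear in each of its four arguments. -/
def IsQuadrilinear (R : T → T → T → T → ℝ) : Prop :=
  (∀ Y U V, IsLinearMap ℝ fun X => R X Y U V) ∧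
  (∀ X U V, IsLinearMap ℝ fun Y => R X Y U V) ∧
  (∀ X Y V, IsLinearMap ℝ fun U => R X Y U V) ∧
  (∀ X Y U, IsLinearMap ℝ fun V => R X Y U V)

/-- An algebraic curvature tensor on `T`. -/
def IsAlgCurv (R : T → T → T → T → ℝ) : Prop :=
  IsQuadrilinear R ∧
  (∀ X Y U V : T, R X Y U V = -R Y X U V) ∧
  (∀ X Y U V : T, R X Y U V = -R X Y V U) ∧
  (∀ X Y Z V : T, R X Y Z V + R Y Z X V + R Z X Y V = 0)

/-- A sectional curvature tensor on `T`. -/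
def IsSecCurv (S : T → T → T → T → ℝ) : Prop :=
  IsQuadrilinear S ∧
  (∀ X Y U V : T, S X Y U V = S Y X U V) ∧
  (∀ X Y U V : T, S X Y U V = S X Y V U) ∧
  (∀ X V : T, S X X X V = 0)

/-- The projection `pr` onto sectional curvature tensors, defined by
`6·(pr S)(X,Y;U,V) := 2·S(X,Y;U,V) + 2·S(U,V;X,Y) − S(X,U;Y,V) − S(X,V;Y,U)
  − S(Y,U;X,V) − S(Y,V;X,U)`. -/
noncomputable def prQ (S : T → T → T → T → ℝ) : T → T → T → T → ℝ :=
  fun X Y U V =>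
    (1 / 6 : ℝ) * (2 * S X Y U V + 2 * S U V X Y - S X U Y V - S X V Y U
      - S Y U X V - S Y V X U)

/-- `pr` is a projection onto the space of sectional curvature tensors. -/
theorem prQ_projection (S : T → T → T → T → ℝ) (hquad : IsQuadrilinear S)
    (hsym1 : ∀ X Y U V : T, S X Y U V = S Y X U V)
    (hsym2 : ∀ X Y U V : T, S X Y U V = S X Y V U) :
    IsSecCurv (prQ S) ∧ (IsSecCurv S → prQ S = S) := by
  obtain ⟨h1, h2, h3, h4⟩ := hquad
  have a1 : ∀ (X X' Y U V : T), S (X + X') Y U V = S X Y U V + S X' Y U V :=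
    fun X X' Y U V => (h1 Y U V).map_add X X'
  have a2 : ∀ (X Y Y' U V : T), S X (Y + Y') U V = S X Y U V + S X Y' U V :=
    fun X Y Y' U V => (h2 X U V).map_add Y Y'
  have a3 : ∀ (X Y U U' V : T), S X Y (U + U') V = S X Y U V + S X Y U' V :=
    fun X Y U U' V => (h3 X Y V).map_add U U'
  have a4 : ∀ (X Y U V V' : T), S X Y U (V + V') = S X Y U V + S X Y U V' :=
    fun X Y U V V' => (h4 X Y U).map_add V V'
  have s1 : ∀ (c : ℝ) (X Y U V : T), S (c • X) Y U V = c * S X Y U V :=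
    fun c X Y U V => (h1 Y U V).map_smul c X
  have s2 : ∀ (c : ℝ) (X Y U V : T), S X (c • Y) U V = c * S X Y U V :=
    fun c X Y U V => (h2 X U V).map_smul c Y
  have s3 : ∀ (c : ℝ) (X Y U V : T), S X Y (c • U) V = c * S X Y U V :=
    fun c X Y U V => (h3 X Y V).map_smul c U
  have s4 : ∀ (c : ℝ) (X Y U V : T), S X Y U (c • V) = c * S X Y U V :=
    fun c X Y U V => (h4 X Y U).map_smul c V
  constructor
  · refine ⟨⟨?_, ?_, ?_, ?_⟩, ?_, ?_, ?_⟩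
    · intro Y U V
      refine ⟨fun X X' => ?_, fun c X => ?_⟩
      · simp only [prQ, a1, a2, a3, a4]; ring
      · simp only [prQ, s1, s2, s3, s4, smul_eq_mul]; ring
    · intro X U V
      refine ⟨fun Y Y' => ?_, fun c Y => ?_⟩
      · simp only [prQ, a1, a2, a3, a4]; ring
      · simp only [prQ, s1, s2, s3, s4, smul_eq_mul]; ring
    · intro X Y V
      refine ⟨fun U U' => ?_, fun c U => ?_⟩
      · simp only [prQ, a1, a2, a3, a4]; ring
      · simp only [prQ, s1, s2, s3, s4, smul_eq_mul]; ring
    · intro X Y U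
      refine ⟨fun V V' => ?_, fun c V => ?_⟩
      · simp only [prQ, a1, a2, a3, a4]; ring
      · simp only [prQ, s1, s2, s3, s4, smul_eq_mul]; ring
    · intro X Y U V
      simp only [prQ]
      rw [hsym1 X Y U V, hsym2 U V X Y]; ring
    · intro X Y U V
      simp only [prQ]
      rw [hsym2 X Y U V, hsym1 U V X Y]; ring
    · intro X V
      simp only [prQ]; ring
  · rintro ⟨-, -, -, hz⟩
    have bianchi : ∀ X Y Z V : T, S X Y Z V + S Y Z X V + S Z X Y V = 0 := by
      intro X Y Z V
      have e12 := hz (X + Y) V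
      have e13 := hz (X + Z) V
      have e23 := hz (Y + Z) V
      have e123 := hz (X + Y + Z) V
      simp only [a1, a2, a3] at e12 e13 e23 e123
      linarith [hz X V, hz Y V, hz Z V, hsym1 Y X Z V, hsym1 Z Y X V, hsym1 Z X Y V,
        hsym1 Y X X V, hsym1 Z X X V, hsym1 X Y Y V, hsym1 Z Y Y V, hsym1 X Z Z V,
        hsym1 Y Z Z V]
    funext X Y U V
    have b1 := bianchi X Y U V
    have b2 := bianchi X Y V U
    have b3 := bianchi U V X Y
    have b4 := bianchi U V Y X
    simp only [prQ]
    linarith [b1, b2, b3, b4, hsym2 X Y U V, hsym1 Y V X U, hsym2 V X Y U, hsym1 V X Y U,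
      hsym2 U V X Y, hsym1 U X Y V, hsym2 Y U X V, hsym1 V Y U X, hsym2 V Y U X,
      hsym2 U V Y X, hsym1 Y U X V, hsym2 Y V X U, hsym2 X U Y V, hsym2 X V Y U,
      hsym1 U Y X V, hsym2 U Y X V, hsym1 V Y X U, hsym2 Y U V X, hsym2 U X V Y,
      hsym1 X V Y U, hsym2 Y X U V, hsym1 X U Y V, hsym2 U X Y V, hsym2 V Y X U,
      hsym1 V U X Y, hsym2 V X U Y, hsym1 X Y U V]
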